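/- Let (U, δ, Z, F) be an interpolation scale with divisibility constant D_K on a compact set K ⊆ U and modulus of concavity ρ = ρ(F). Then for any f ∈ F, w₀ ∈ U, and z₀ ∈ K with ρ·D_K·|δ(w₀,z₀)| ≤ 1, one has ‖f(z₀)‖_{z₀} ≥ (1/(3ρ))‖f(w₀)‖_{w₀} − |δ(w₀,z₀)|·(ρ D_K/3)·‖f‖_F. -/

import Mathlib

open Filter Topology

/-- Lemma 2.6: for an interpolation scale with divisibility constant `D` on a
compact set `K` and modulus of concavity `ρ`, if `ρ·D·|δ(w₀,z₀)| ≤ 1` then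
`‖f(z₀)‖_{z₀} ≥ (1/(3ρ))‖f(w₀)‖_{w₀} − |δ(w₀,z₀)|·(ρD/3)·‖f‖_F`. -/
theorem evaluation_lower_bound {U : Type*} [TopologicalSpace U] {Z F : Type*}
    [AddCommGroup Z] [Module ℂ Z] [AddCommGroup F] [Module ℂ F]
    (δ : U → U → ℂ)
    (hδcont : Continuous fun p : U × U => δ p.1 p.2)
    (hδ0 : ∀ z w, δ z w = 0 ↔ z = w)
    (qF : F → ℝ) (ρ : ℝ) (hρ : 1 ≤ ρ)
    (hqF0 : ∀ f, 0 ≤ qF f) (hqFz : ∀ f, qF f = 0 ↔ f = 0)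
    (hFhom : ∀ (a : ℂ) (f : F), qF (a • f) = ‖a‖ * qF f)
    (hFtri : ∀ f g, qF (f + g) ≤ ρ * (qF f + qF g))
    (evF : F →ₗ[ℂ] (U → Z))
    (nX : U → Z → ℝ)
    (hnX : ∀ w x, nX w x = sInf {c : ℝ | ∃ f : F, evF f w = x ∧ c = qF f})
    -- the compact set and the divisibility axiom on it with constant `D`:
    (K : Set U) (hK : IsCompact K) (D : ℝ) (hD : 0 < D)
    (hdiv : ∀ z ∈ K, ∀ f : F, evF f z = 0 → ∃ h : F,
      (∀ w : U, δ w z • evF h w = evF f w) ∧ qF h ≤ D * qF f) :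
    ∀ (f : F) (w₀ : U), ∀ z₀ ∈ K,
      ρ * D * ‖δ w₀ z₀‖ ≤ 1 →
      nX z₀ (evF f z₀) ≥
        (1 / (3 * ρ)) * nX w₀ (evF f w₀) -
          ‖δ w₀ z₀‖ * (ρ * D / 3) * qF f := by
  intro f w₀ z₀ hz₀ hsmall
  have hρ0 : (0:ℝ) < ρ := lt_of_lt_of_le one_pos hρ
  set a : ℝ := ‖δ w₀ z₀‖ with ha
  have ha0 : 0 ≤ a := norm_nonneg _
  rw [hnX]
  rw [ge_iff_le]
  refine le_csInf ⟨qF f, ⟨f, rfl, rfl⟩⟩ ?_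
  rintro c ⟨g, hg, rfl⟩
  -- divisibility applied to f - g
  have hfg : evF (f - g) z₀ = 0 := by
    simp [map_sub, sub_eq_zero, hg]
  obtain ⟨h, hh, hhq⟩ := hdiv z₀ hz₀ (f - g) hfg
  -- the competitor g + δ w₀ z₀ • h evaluates to evF f w₀ at w₀
  have hev : evF (g + δ w₀ z₀ • h) w₀ = evF f w₀ := by
    have e1 := hh w₀
    rw [map_sub] at e1
    simp only [map_add, map_smul, Pi.add_apply, Pi.smul_apply, Pi.sub_apply] at e1 ⊢
    rw [e1]; abel
  -- so nX w₀ (evF f w₀) ≤ qF (g + δ w₀ z₀ • h)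
  have hbdd : BddBelow {c : ℝ | ∃ f' : F, evF f' w₀ = evF f w₀ ∧ c = qF f'} := by
    refine ⟨0, ?_⟩
    rintro c ⟨f', _, rfl⟩
    exact hqF0 f'
  have hN : nX w₀ (evF f w₀) ≤ qF (g + δ w₀ z₀ • h) := by
    rw [hnX]
    exact csInf_le hbdd ⟨g + δ w₀ z₀ • h, hev, rfl⟩
  have h1 : qF (g + δ w₀ z₀ • h) ≤ ρ * (qF g + a * qF h) := by
    have := hFtri g (δ w₀ z₀ • h)
    rw [hFhom] at this
    exact this
  have h2 : qF (f - g) ≤ ρ * (qF f + qF g) := by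
    have := hFtri f (-g)
    have hneg : qF (-g) = qF g := by
      have := hFhom (-1 : ℂ) g
      simpa using this
    rw [hneg] at this
    simpa [sub_eq_add_neg] using this
  have h3 : qF h ≤ D * (ρ * (qF f + qF g)) :=
    le_trans hhq (by nlinarith [hqF0 (f - g)])
  have key : nX w₀ (evF f w₀) ≤ 3 * ρ * qF g + a * ρ^2 * D * qF f := by
    have hg0 := hqF0 g
    have hf0 := hqF0 f
    have hh0 := hqF0 h
    nlinarith [hN, h1, h2,
      mul_le_mul_of_nonneg_left h3 (mul_nonneg hρ0.le ha0),
      mul_le_mul_of_nonneg_right hsmall (mul_nonneg hρ0.le hg0)]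
  rw [sub_le_iff_le_add, one_div, inv_mul_le_iff₀ (by positivity : (0:ℝ) < 3 * ρ)]
  nlinarith [key]
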